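/- Assume Properties 3 and 4. For every finite sequence of condensed reactions transforming a finite multiset Â of resting sets into a finite multiset B̂ of resting sets (each step removes the reactant multiset of one condensed reaction from the current multiset and adds its product multiset), and for every multiset A of complexes with A ~ Â and every multiset B of complexes with B ~ B̂, there exists a finite sequence of detailed reactions in R transforming A into B (each step removes the reactant multiset of one reaction of R from the current multiset of complexes and adds its product multiset). -/

import Mathlib

/-- A reaction: a pair (reactants, products) of finite multisets of complexes. -/
abbrev Rxn (C : Type*) := Multiset C × Multiset C

variable {C : Type*}

/-- Edge of the fast-reaction digraph Γ: a fast (1,1) reaction ({x}, {y}) in R. -/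
def FastEdge (R : Set (Rxn C)) (x y : C) : Prop :=
  ((({x} : Multiset C), ({y} : Multiset C)) : Rxn C) ∈ R

/-- Reachability along Γ. -/
def Reach (R : Set (Rxn C)) : C → C → Prop :=
  Relation.ReflTransGen (FastEdge R)

/-- The strongly connected component of Γ containing x. -/
def scc (R : Set (Rxn C)) (x : C) : Set C :=
  {y | Reach R x y ∧ Reach R y x}

/-- Q is a resting set: an SCC of Γ all of whose outgoing fast reactions stay in Q. -/
def IsRestingSet (R : Set (Rxn C)) (Q : Set C) : Prop :=
  (∃ x, Q = scc R x) ∧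
    ∀ r ∈ R, r.1.card = 1 → (∀ a ∈ r.1, a ∈ Q) → ∀ b ∈ r.2, b ∈ Q

/-- x is a resting complex: a member of some resting set. -/
def RestingComplex (R : Set (Rxn C)) (x : C) : Prop :=
  ∃ Q, IsRestingSet R Q ∧ x ∈ Q

/-- One step of a fast transition: replace one occurrence of x by the products of a
fast reaction ({x}, P) ∈ R. -/
def FastStep (R : Set (Rxn C)) (M N : Multiset C) : Prop :=
  ∃ (x : C) (P M' : Multiset C),
    ((({x} : Multiset C), P) : Rxn C) ∈ R ∧ M = x ::ₘ M' ∧ N = P + M'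

/-- A fast transition: finitely many fast steps. -/
def FastTransition (R : Set (Rxn C)) : Multiset C → Multiset C → Prop :=
  Relation.ReflTransGen (FastStep R)

/-- The fate predicate Fate(x, F), for x a complex and F a finite multiset of resting sets. -/
inductive Fate (R : Set (Rxn C)) : C → Multiset (Set C) → Prop
  | resting (x : C) (h : IsRestingSet R (scc R x)) :
      Fate R x {scc R x}
  | step (x a : C) (l : List (C × Multiset (Set C)))
      (hnr : ¬ IsRestingSet R (scc R x))
      (ha : a ∈ scc R x)
      (hr : ((({a} : Multiset C), (↑(l.map Prod.fst) : Multiset C)) : Rxn C) ∈ R)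
      (hout : ∃ b ∈ l.map Prod.fst, b ∉ scc R x)
      (hf : ∀ p ∈ l, Fate R p.1 p.2) :
      Fate R x (l.map Prod.snd).sum

/-- B ~ F : the multiset B of complexes represents the multiset F of resting sets,
i.e. there is a bijective matching pairing each b ∈ B with a Q ∈ F with b ∈ Q. -/
def Represents (B : Multiset C) (F : Multiset (Set C)) : Prop :=
  Multiset.Rel (fun b Q => b ∈ Q) B F

/-- F is a fate of the multiset P of complexes: F = F_1 + ... + F_n where
P = {b_1, ..., b_n} and Fate(b_i, F_i) for each i. -/
def FateM (R : Set (Rxn C)) (P : Multiset C) (F : Multiset (Set C)) : Prop :=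
  ∃ l : List (C × Multiset (Set C)),
    P = (↑(l.map Prod.fst) : Multiset C) ∧
    F = (l.map Prod.snd).sum ∧
    ∀ p ∈ l, Fate R p.1 p.2

/-- The condensed reactions: for each slow reaction ({a₁, a₂}, P) ∈ R and each fate F
of P, the condensed reaction ({SCC(a₁), SCC(a₂)}, F). -/
def IsCondensed (R : Set (Rxn C)) (Ahat Bhat : Multiset (Set C)) : Prop :=
  ∃ (a1 a2 : C) (P : Multiset C),
    ((({a1, a2} : Multiset C), P) : Rxn C) ∈ R ∧
    Ahat = ({scc R a1, scc R a2} : Multiset (Set C)) ∧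
    FateM R P Bhat

/-- Every reaction in R is fast (unimolecular) or slow (bimolecular). -/
def FastOrSlow (R : Set (Rxn C)) : Prop :=
  ∀ r ∈ R, r.1.card = 1 ∨ r.1.card = 2

/-- Reactants and products of every reaction are nonempty. -/
def NonemptyRxns (R : Set (Rxn C)) : Prop :=
  ∀ r ∈ R, r.1 ≠ 0 ∧ r.2 ≠ 0

/-- Property 3: every finite cyclic sequence of fast reactions, in which each reaction
consumes a product of the previous one (cyclically), consists of (1,1) reactions only. -/
def Prop3 (R : Set (Rxn C)) : Prop :=
  ∀ (n : ℕ) (hn : 0 < n) (r : Fin n → Rxn C),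
    (∀ i, r i ∈ R ∧ (r i).1.card = 1) →
    (∀ i : Fin n, ∀ a ∈ (r ⟨(i.1 + 1) % n, Nat.mod_lt _ hn⟩).1, a ∈ (r i).2) →
    ∀ i, (r i).2.card = 1

/-- Property 4: both reactants of every slow reaction are resting complexes. -/
def Prop4 (R : Set (Rxn C)) : Prop :=
  ∀ r ∈ R, r.1.card = 2 → ∀ a ∈ r.1, RestingComplex R a

/-- A resting-state transition from {a₁, a₂} to B: a slow reaction ({a₁, a₂}, P) ∈ R
followed by a fast transition from P to B. -/
def RestingTransition (R : Set (Rxn C)) (a1 a2 : C) (B : Multiset C) : Prop :=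
  ∃ P : Multiset C, ((({a1, a2} : Multiset C), P) : Rxn C) ∈ R ∧ FastTransition R P B

/-- One step of a sequence of detailed reactions: remove the reactants of some
reaction in R from the current multiset and add its products. -/
def DetailedStep (R : Set (Rxn C)) (M N : Multiset C) : Prop :=
  ∃ r ∈ R, ∃ M' : Multiset C, M = r.1 + M' ∧ N = r.2 + M'

/-- One step of a sequence of condensed reactions: remove the reactant multiset of a
condensed reaction from the current multiset of resting sets and add its products. -/
def CondensedStep (R : Set (Rxn C)) (M N : Multiset (Set C)) : Prop :=
  ∃ Ahat Bhat M' : Multiset (Set C),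
    IsCondensed R Ahat Bhat ∧ M = Ahat + M' ∧ N = Bhat + M'

section Aux

variable {R : Set (Rxn C)}

private lemma dtrans_add {M N : Multiset C} (K : Multiset C)
    (h : Relation.ReflTransGen (DetailedStep R) M N) :
    Relation.ReflTransGen (DetailedStep R) (M + K) (N + K) := by
  induction h with
  | refl => exact .refl
  | tail _ e ih =>
    obtain ⟨r, hr, M', h1, h2⟩ := e
    exact ih.tail ⟨r, hr, M' + K, by simp [h1, add_assoc], by simp [h2, add_assoc]⟩

private lemma dtrans_pair {M N M' N' : Multiset C}
    (h : Relation.ReflTransGen (DetailedStep R) M N)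
    (h' : Relation.ReflTransGen (DetailedStep R) M' N') :
    Relation.ReflTransGen (DetailedStep R) (M + M') (N + N') := by
  refine (dtrans_add M' h).trans ?_
  rw [add_comm N M', add_comm N N']
  exact dtrans_add N h'

private lemma reach_dtrans {x y : C} (h : Reach R x y) :
    Relation.ReflTransGen (DetailedStep R) {x} {y} := by
  induction h with
  | refl => exact .refl
  | @tail b c _ e ih =>
    exact ih.tail ⟨((({b} : Multiset C), ({c} : Multiset C)) : Rxn C), e, 0, by simp, by simp⟩

private lemma mem_scc_self (R : Set (Rxn C)) (x : C) : x ∈ scc R x :=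
  ⟨Relation.ReflTransGen.refl, Relation.ReflTransGen.refl⟩

private lemma mem_listsum {α : Type*} {L : List (Multiset α)} {a : α} (h : a ∈ L.sum) :
    ∃ m ∈ L, a ∈ m := by
  induction L with
  | nil => simp at h
  | cons m L ih =>
    rw [List.sum_cons, Multiset.mem_add] at h
    rcases h with h | h
    · exact ⟨m, by simp, h⟩
    · obtain ⟨m', hm', h⟩ := ih h; exact ⟨m', by simp [hm'], h⟩

private lemma fate_nonempty {x : C} {F : Multiset (Set C)} (h : Fate R x F) :
    ∀ Q ∈ F, ∃ b, b ∈ Q := by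
  induction h with
  | resting x h =>
    intro Q hQ
    rw [Multiset.mem_singleton] at hQ
    exact ⟨x, hQ ▸ mem_scc_self R x⟩
  | step x a l hnr ha hr hout hf ih =>
    intro Q hQ
    obtain ⟨m, hm, hQm⟩ := mem_listsum hQ
    obtain ⟨p, hp, rfl⟩ := List.mem_map.mp hm
    exact ih p hp Q hQm

private lemma exists_rep {F : Multiset (Set C)} (h : ∀ Q ∈ F, ∃ b, b ∈ Q) :
    ∃ B : Multiset C, Represents B F := by
  induction F using Multiset.induction with
  | empty => exact ⟨0, Multiset.Rel.zero⟩
  | cons Q F ih =>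
    obtain ⟨b, hb⟩ := h Q (Multiset.mem_cons_self _ _)
    obtain ⟨B, hB⟩ := ih fun Q' hQ' => h Q' (Multiset.mem_cons_of_mem hQ')
    exact ⟨b ::ₘ B, Multiset.Rel.cons hb hB⟩

private lemma fateM_det :
    ∀ l : List (C × Multiset (Set C)),
      (∀ p ∈ l, ∀ B : Multiset C, Represents B p.2 →
        Relation.ReflTransGen (DetailedStep R) {p.1} B) →
      ∀ B : Multiset C, Represents B (l.map Prod.snd).sum →
      Relation.ReflTransGen (DetailedStep R) (↑(l.map Prod.fst)) B := by
  intro l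
  induction l with
  | nil =>
    intro _ B hB
    simp only [List.map_nil, List.sum_nil] at hB
    rw [Multiset.rel_zero_right.mp hB]
    exact .refl
  | cons p l ih =>
    intro hl B hB
    simp only [List.map_cons, List.sum_cons] at hB
    obtain ⟨B1, B2, hB1, hB2, rfl⟩ := Multiset.rel_add_right.mp hB
    have h1 := hl p List.mem_cons_self B1 hB1
    have h2 := ih (fun q hq => hl q (List.mem_cons_of_mem _ hq)) B2 hB2
    have : (↑((p :: l).map Prod.fst) : Multiset C) = {p.1} + ↑(l.map Prod.fst) := by
      simp [Multiset.singleton_add]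
    rw [this]
    exact dtrans_pair h1 h2

private lemma fate_det {x : C} {F : Multiset (Set C)} (h : Fate R x F) :
    ∀ B : Multiset C, Represents B F → Relation.ReflTransGen (DetailedStep R) {x} B := by
  induction h with
  | resting x hres =>
    intro B hB
    rw [show ({scc R x} : Multiset (Set C)) = scc R x ::ₘ 0 from rfl] at hB
    obtain ⟨b, B', hb, hB', rfl⟩ := Multiset.rel_cons_right.mp hB
    rw [Multiset.rel_zero_right.mp hB']
    exact reach_dtrans hb.1
  | step x a l hnr ha hr hout hf ih =>
    intro B hB
    have h1 : Relation.ReflTransGen (DetailedStep R) {x} {a} := reach_dtrans ha.1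
    have h2 : DetailedStep R {a} (↑(l.map Prod.fst)) :=
      ⟨((({a} : Multiset C), (↑(l.map Prod.fst) : Multiset C)) : Rxn C), hr, 0, by simp, by simp⟩
    exact (h1.tail h2).trans (fateM_det l ih B hB)

private lemma rep_to_rep {Fhat : Multiset (Set C)} (hres : ∀ Q ∈ Fhat, ∃ x, Q = scc R x) :
    ∀ B B' : Multiset C, Represents B Fhat → Represents B' Fhat →
      Relation.ReflTransGen (DetailedStep R) B B' := by
  induction Fhat using Multiset.induction with
  | empty =>
    intro B B' h h'
    rw [Multiset.rel_zero_right.mp h, Multiset.rel_zero_right.mp h']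
  | cons Q F ih =>
    intro B B' h h'
    obtain ⟨b, B0, hb, hB0, rfl⟩ := Multiset.rel_cons_right.mp h
    obtain ⟨b', B0', hb', hB0', rfl⟩ := Multiset.rel_cons_right.mp h'
    obtain ⟨x, rfl⟩ := hres Q (Multiset.mem_cons_self _ _)
    have hbb' : Reach R b b' := hb.2.trans hb'.1
    have hrest := ih (fun Q' hQ' => hres Q' (Multiset.mem_cons_of_mem hQ')) B0 B0' hB0 hB0'
    have : ∀ (c : C) (M : Multiset C), c ::ₘ M = {c} + M := fun c M => by
      simp [Multiset.singleton_add]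
    rw [this b B0, this b' B0']
    exact dtrans_pair (reach_dtrans hbb') hrest

end Aux

/-- Corollary 1: any sequence of condensed reactions from Â to B̂ can be realized,
for any A ~ Â and B ~ B̂, by a sequence of detailed reactions from A to B. -/
theorem condensed_seq_to_detailed_seq {C : Type*} [Fintype C] (R : Set (Rxn C))
    (hRfin : R.Finite) (hne : NonemptyRxns R) (hfs : FastOrSlow R)
    (h3 : Prop3 R) (h4 : Prop4 R)
    (Ahat Bhat : Multiset (Set C))
    (hA : ∀ Q ∈ Ahat, IsRestingSet R Q) (hB : ∀ Q ∈ Bhat, IsRestingSet R Q)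
    (hseq : Relation.ReflTransGen (CondensedStep R) Ahat Bhat)
    (A B : Multiset C) (hAr : Represents A Ahat) (hBr : Represents B Bhat) :
    Relation.ReflTransGen (DetailedStep R) A B := by
  clear hA hne hfs h3 h4 hRfin
  induction hseq using Relation.ReflTransGen.head_induction_on generalizing A with
  | refl => exact rep_to_rep (fun Q hQ => (hB Q hQ).1) A B hAr hBr
  | head hstep htail ih =>
    obtain ⟨Ahat_s, Bhat_s, M', ⟨a1, a2, P, hslow, rfl, l, rfl, rfl, hfl⟩, rfl, rfl⟩ := hstep
    -- decompose A
    obtain ⟨A1, A2, hA1, hA2, rfl⟩ := Multiset.rel_add_right.mp hAr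
    rw [show ({scc R a1, scc R a2} : Multiset (Set C)) = scc R a1 ::ₘ scc R a2 ::ₘ 0 from rfl]
      at hA1
    obtain ⟨c1, A1', hc1, hA1', rfl⟩ := Multiset.rel_cons_right.mp hA1
    obtain ⟨c2, A1'', hc2, hA1'', rfl⟩ := Multiset.rel_cons_right.mp hA1'
    rw [Multiset.rel_zero_right.mp hA1'']
    -- build representative of the fate of P
    have hnonempty : ∀ Q ∈ (l.map Prod.snd).sum, ∃ b, b ∈ Q := by
      intro Q hQ
      obtain ⟨m, hm, hQm⟩ := mem_listsum hQ
      obtain ⟨p, hp, rfl⟩ := List.mem_map.mp hm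
      exact fate_nonempty (hfl p hp) Q hQm
    obtain ⟨BP, hBP⟩ := exists_rep hnonempty
    -- detailed transition from A to BP + A2
    have t1 : Relation.ReflTransGen (DetailedStep R) ({c1} + {c2}) ({a1} + {a2}) :=
      dtrans_pair (reach_dtrans hc1.2) (reach_dtrans hc2.2)
    have t2 : DetailedStep R ({a1} + {a2}) (↑(l.map Prod.fst)) :=
      ⟨((({a1, a2} : Multiset C), (↑(l.map Prod.fst) : Multiset C)) : Rxn C), hslow, 0,
        by simp [Multiset.insert_eq_cons, Multiset.singleton_add], by simp⟩
    have t3 : Relation.ReflTransGen (DetailedStep R) (↑(l.map Prod.fst)) BP :=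
      fateM_det l (fun p hp => fate_det (hfl p hp)) BP hBP
    have t4 : Relation.ReflTransGen (DetailedStep R) ({c1} + {c2}) BP :=
      (t1.tail t2).trans t3
    have t5 : Relation.ReflTransGen (DetailedStep R)
        (({c1} + {c2}) + A2) (BP + A2) := dtrans_add A2 t4
    have heq : c1 ::ₘ c2 ::ₘ 0 + A2 = ({c1} + {c2}) + A2 := by
      simp [Multiset.singleton_add]
    rw [heq]
    exact t5.trans (ih (BP + A2) (Multiset.Rel.add hBP hA2))
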